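/- Kolmogorov-Chaitin randomness is not decidable: there is no total computable function which, given (the code of) a finite binary string, decides whether its Kolmogorov complexity relative to a fixed universal machine is at least its length. -/

import Mathlib

/-- Kolmogorov complexity of `x` relative to the machine `U`: the least binary
length `|p|` of a program `p` with `U p = x`. -/
noncomputable def K (U : ℕ →. ℕ) (x : ℕ) : ℕ :=
  sInf { n | ∃ p, x ∈ U p ∧ Nat.size p = n }

/-- `K U x` is attained by some program. -/
lemma K_mem (U : ℕ →. ℕ) (hsurj : ∀ x, ∃ p, x ∈ U p) (x : ℕ) :
    ∃ p, x ∈ U p ∧ Nat.size p = K U x := by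
  have : K U x ∈ { n | ∃ p, x ∈ U p ∧ Nat.size p = n } := by
    apply Nat.sInf_mem
    obtain ⟨p, hp⟩ := hsurj x
    exact ⟨Nat.size p, p, hp, rfl⟩
  exact this

lemma K_le (U : ℕ →. ℕ) {x p : ℕ} (hp : x ∈ U p) : K U x ≤ Nat.size p :=
  Nat.sInf_le ⟨p, hp, rfl⟩

/-- Counting argument: there exist random strings of arbitrarily large length. -/
lemma exists_random (U : ℕ →. ℕ) (hsurj : ∀ x, ∃ p, x ∈ U p) (n : ℕ) :
    ∃ x, 2 ^ n ≤ x ∧ Nat.size x ≤ K U x := by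
  by_contra h
  push_neg at h
  -- every string in [2^n, 2^(n+2)) is nonrandom; map it injectively to a
  -- program of size < n+2, i.e. a number < 2^(n+1); too few programs.
  choose prog hprog hsize using K_mem U hsurj
  have hcard := Finset.card_le_card_of_injOn prog
    (s := Finset.Ico (2 ^ n) (2 ^ (n + 2))) (t := Finset.range (2 ^ (n + 1)))
    (by
      intro x hx
      simp only [Finset.coe_Ico, Set.mem_Ico] at hx
      have hnr : K U x < Nat.size x := h x hx.1
      have hxsize : Nat.size x ≤ n + 2 := Nat.size_le.2 hx.2
      have : Nat.size (prog x) ≤ n + 1 := by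
        rw [hsize x]; omega
      simpa [Finset.mem_range] using Nat.size_le.1 this)
    (by
      intro x _ y _ hxy
      exact Part.mem_unique (hprog x) (hxy ▸ hprog y))
  rw [Nat.card_Ico, Finset.card_range] at hcard
  have h1 : (0:ℕ) < 2 ^ n := Nat.pow_pos (by norm_num)
  have h2 : (2:ℕ) ^ (n + 1) = 2 * 2 ^ n := by ring
  have h3 : (2:ℕ) ^ (n + 2) = 4 * 2 ^ n := by ring
  omega

/-- Kolmogorov–Chaitin randomness is not decidable: for any universal partial
computable function `U` (one which outputs every value, and simulates every
partial computable function with constant overhead in program length), the set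
of random strings `{ x | K(x) ≥ |x| }` is not decidable. -/
theorem randomness_not_decidable (U : ℕ →. ℕ) (hU : Partrec U)
    (hsurj : ∀ x, ∃ p, x ∈ U p)
    (huniv : ∀ f : ℕ →. ℕ, Partrec f → ∃ c, ∀ x y, y ∈ f x →
      ∃ p, y ∈ U p ∧ Nat.size p ≤ Nat.size x + c) :
    ¬ ComputablePred (fun x : ℕ => Nat.size x ≤ K U x) := by
  intro hdec
  obtain ⟨f, hf, hfR⟩ := ComputablePred.computable_iff.1 hdec
  have hfR' : ∀ x, (Nat.size x ≤ K U x) ↔ f x = true := fun x => by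
    exact iff_of_eq (congrFun hfR x)
  -- the search function: the least random string ≥ 2^n
  set g : ℕ →. ℕ := fun n => Nat.rfind (fun x => Part.some (decide (2 ^ n ≤ x) && f x))
    with hg
  have hgc : Partrec g := by
    apply Partrec.rfind
    have hpow : Primrec₂ ((· ^ ·) : ℕ → ℕ → ℕ) := Primrec₂.unpaired'.1 Nat.Primrec.pow
    have h1 : Primrec₂ (fun (n x : ℕ) => decide (2 ^ n ≤ x)) :=
      (Primrec.nat_le.comp (hpow.comp (Primrec.const 2) Primrec.fst) Primrec.snd).decide
    have hband : Computable₂ (· && · : Bool → Bool → Bool) :=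
      Primrec.to_comp (Primrec.dom_bool₂ _)
    have h2 : Computable fun p : ℕ × ℕ => decide (2 ^ p.1 ≤ p.2) && f p.2 :=
      hband.comp (h1.to_comp.comp Computable.fst Computable.snd)
        (hf.comp Computable.snd)
    exact Computable₂.partrec₂ h2
  -- an element of `g n` for each `n`
  have hmem : ∀ n, ∃ y, y ∈ g n ∧ 2 ^ n ≤ y ∧ Nat.size y ≤ K U y := by
    intro n
    have hQ : ∃ x, 2 ^ n ≤ x ∧ f x = true := by
      obtain ⟨x, hx1, hx2⟩ := exists_random U hsurj n
      exact ⟨x, hx1, (hfR' x).1 hx2⟩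
    classical
    refine ⟨Nat.find hQ, ?_, (Nat.find_spec hQ).1,
      (hfR' _).2 (Nat.find_spec hQ).2⟩
    rw [hg]
    refine Nat.mem_rfind.2 ?_
    constructor
    · simp only [Part.mem_some_iff]
      have := Nat.find_spec hQ
      simp [this.1, this.2]
    · intro m hm
      have := Nat.find_min hQ hm
      simp only [Part.mem_some_iff]
      rw [not_and_or] at this
      rcases this with h' | h' <;> simp [h']
  obtain ⟨c, hc⟩ := huniv g hgc
  -- for every n : n < size n + c
  have key : ∀ n, n < Nat.size n + c := by
    intro n
    obtain ⟨y, hy, hy1, hy2⟩ := hmem n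
    obtain ⟨p, hp, hps⟩ := hc n y hy
    have h1 : K U y ≤ Nat.size p := K_le U hp
    have h2 : n < Nat.size y := Nat.lt_size.2 hy1
    omega
  -- contradiction at n = 2^(c+2)
  have hn := key (2 ^ (c + 2))
  rw [Nat.size_pow] at hn
  have h4 : c + 1 ≤ 2 ^ c := Nat.lt_two_pow_self
  have h5 : (2:ℕ) ^ (c + 2) = 4 * 2 ^ c := by ring
  omega
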